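/- For every integer k ≥ 1, the function v0 : ℝ² → ℝ defined by v0 = (4|T|²/(9(k+1))) (λ0R)^{k+1} (λ2 − λ1) is continuously differentiable on all of ℝ² (in particular v0 ∈ C¹(T)). -/

import Mathlib

noncomputable section

open Matrix MeasureTheory

abbrev Vec2 : Type := Fin 2 → ℝ

/-- Euclidean dot product on `ℝ²`. -/
def dot2 (a b : Vec2) : ℝ := a 0 * b 0 + a 1 * b 1

/-- Partial derivative of `f` in the `i`-th coordinate direction. -/
def pd (i : Fin 2) (f : Vec2 → ℝ) (x : Vec2) : ℝ := fderiv ℝ f x (Pi.single i 1)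

/-- The matrix `a bᵀ`. -/
def outer (a b : Vec2) : Matrix (Fin 2) (Fin 2) ℝ := fun i j => a i * b j

/-- `sym(a ⊗ b) = (a bᵀ + b aᵀ)/2`. -/
def symOuter (a b : Vec2) : Matrix (Fin 2) (Fin 2) ℝ := (1 / 2 : ℝ) • (outer a b + outer b a)

/-- The Airy operator (rotated Hessian)
`J(f) = [[∂²f/∂x₂², −∂²f/∂x₁∂x₂], [−∂²f/∂x₁∂x₂, ∂²f/∂x₁²]]`. -/
def airy (f : Vec2 → ℝ) (x : Vec2) : Matrix (Fin 2) (Fin 2) ℝ :=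
  !![pd 1 (pd 1 f) x, -(pd 0 (pd 1 f) x); -(pd 0 (pd 1 f) x), pd 0 (pd 0 f) x]

/-- `f` is the evaluation function of a real polynomial in two variables of total degree ≤ m. -/
def IsPolyDeg (m : ℕ) (f : Vec2 → ℝ) : Prop :=
  ∃ P : MvPolynomial (Fin 2) ℝ, P.totalDegree ≤ m ∧ ∀ x, f x = MvPolynomial.eval x P

/-- `f` is the evaluation function of a real polynomial in two variables. -/
def IsPolyFun (f : Vec2 → ℝ) : Prop :=
  ∃ P : MvPolynomial (Fin 2) ℝ, ∀ x, f x = MvPolynomial.eval x P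

/-- `λᵢᴿ = λᵢ − min(λ₀, λ₁, λ₂)`: hat function of vertex `vᵢ` on the barycentric refinement. -/
def lamR (lam : Fin 3 → Vec2 → ℝ) (i : Fin 3) (x : Vec2) : ℝ :=
  lam i x - min (lam 0 x) (min (lam 1 x) (lam 2 x))

/-- `x ∈ Ωⱼ`: the region where `λⱼ` is the strict minimum of the barycentric coordinates. -/
def inReg (lam : Fin 3 → Vec2 → ℝ) (j : Fin 3) (x : Vec2) : Prop :=
  ∀ i : Fin 3, i ≠ j → lam j x < lam i x

/-- The branch formula of `ψᵢ` on `Ω_{i+2}`. -/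
def psiA (lam : Fin 3 → Vec2 → ℝ) (tc : Fin 3 → Vec2) (k : ℕ) (i : Fin 3) (x : Vec2) :
    Matrix (Fin 2) (Fin 2) ℝ :=
  (2 * (lam i x - lam (i + 2) x) ^ k) • symOuter (tc i) (tc (i + 1)) -
    ((k : ℝ) * (lam i x - lam (i + 2) x) ^ (k - 1) * (lam (i + 1) x - lam (i + 2) x)) •
      outer (tc (i + 1)) (tc (i + 1))

/-- The branch formula of `ψᵢ` on `Ω_{i+1}`. -/
def psiB (lam : Fin 3 → Vec2 → ℝ) (tc : Fin 3 → Vec2) (k : ℕ) (i : Fin 3) (x : Vec2) :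
    Matrix (Fin 2) (Fin 2) ℝ :=
  -((2 * (lam i x - lam (i + 1) x) ^ k) • symOuter (tc i) (tc (i + 2))) +
    ((k : ℝ) * (lam i x - lam (i + 1) x) ^ (k - 1) * (lam (i + 2) x - lam (i + 1) x)) •
      outer (tc (i + 2)) (tc (i + 2))

open Classical in
/-- The piecewise enrichment stress `ψᵢ`. -/
def psiFun (lam : Fin 3 → Vec2 → ℝ) (tc : Fin 3 → Vec2) (k : ℕ) (i : Fin 3) (x : Vec2) :
    Matrix (Fin 2) (Fin 2) ℝ :=
  if inReg lam (i + 2) x then psiA lam tc k i x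
  else if inReg lam (i + 1) x then psiB lam tc k i x
  else 0

/-- The `Ωⱼ`-branch polynomial formula of `ψᵢ` (value used on the closed edge `eⱼ`). -/
def psiEdge (lam : Fin 3 → Vec2 → ℝ) (tc : Fin 3 → Vec2) (k : ℕ) (i j : Fin 3) (x : Vec2) :
    Matrix (Fin 2) (Fin 2) ℝ :=
  if j = i + 2 then psiA lam tc k i x
  else if j = i + 1 then psiB lam tc k i x
  else 0

/-- The Airy potential `vᵢ = (4|T|²/(9(k+1))) (λᵢᴿ)^{k+1} (λ_{i+2} − λ_{i+1})`. -/
def vEnrich (lam : Fin 3 → Vec2 → ℝ) (area : ℝ) (k : ℕ) (i : Fin 3) (x : Vec2) : ℝ :=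
  4 * area ^ 2 / (9 * (k + 1)) * (lamR lam i x) ^ (k + 1) * (lam (i + 2) x - lam (i + 1) x)

/-- `v_{i,i+1} = (C_T/(k+1))[(λᵢᴿ)^{k+1} − λᵢ^{k+1}](λ_{i+2} − λ_{i+1}) − C_T λᵢ^k λ_{i+1} λ_{i+2}`. -/
def vE1 (lam : Fin 3 → Vec2 → ℝ) (area : ℝ) (k : ℕ) (i : Fin 3) (x : Vec2) : ℝ :=
  4 * area ^ 2 / 9 / (k + 1) * ((lamR lam i x) ^ (k + 1) - (lam i x) ^ (k + 1)) *
      (lam (i + 2) x - lam (i + 1) x) -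
    4 * area ^ 2 / 9 * (lam i x) ^ k * lam (i + 1) x * lam (i + 2) x

/-- `v_{i,i+2} = (C_T/(k+1))[(λᵢᴿ)^{k+1} − λᵢ^{k+1}](λ_{i+2} − λ_{i+1}) + C_T λᵢ^k λ_{i+1} λ_{i+2}`. -/
def vE2 (lam : Fin 3 → Vec2 → ℝ) (area : ℝ) (k : ℕ) (i : Fin 3) (x : Vec2) : ℝ :=
  4 * area ^ 2 / 9 / (k + 1) * ((lamR lam i x) ^ (k + 1) - (lam i x) ^ (k + 1)) *
      (lam (i + 2) x - lam (i + 1) x) +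
    4 * area ^ 2 / 9 * (lam i x) ^ k * lam (i + 1) x * lam (i + 2) x

/-- `wᵢ = (1/(4 C_T c_{i,i})) (v_{i+1,i} − v_{i+2,i})`, with `k = 1`. -/
def wFun (lam : Fin 3 → Vec2 → ℝ) (g : Fin 3 → Vec2) (n : Fin 3 → Vec2) (area : ℝ)
    (i : Fin 3) (x : Vec2) : ℝ :=
  1 / (4 * (4 * area ^ 2 / 9) * dot2 (g i) (n i)) *
    (vE2 lam area 1 (i + 1) x - vE1 lam area 1 (i + 2) x)

/-- `sᵢ = λ_{i+1} λ_{i+2} (λ_{i+1} − λ_{i+2})`. -/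
def sFun (lam : Fin 3 → Vec2 → ℝ) (i : Fin 3) (x : Vec2) : ℝ :=
  lam (i + 1) x * lam (i + 2) x * (lam (i + 1) x - lam (i + 2) x)

/-- `uᵢ = sᵢ − 3(c_{i+1,i} − c_{i+2,i}) wᵢ − c_{i+1,i+1} w_{i+1} + c_{i+2,i+2} w_{i+2}`. -/
def uFun (lam : Fin 3 → Vec2 → ℝ) (g : Fin 3 → Vec2) (n : Fin 3 → Vec2) (area : ℝ)
    (i : Fin 3) (x : Vec2) : ℝ :=
  sFun lam i x - 3 * (dot2 (g (i + 1)) (n i) - dot2 (g (i + 2)) (n i)) * wFun lam g n area i x -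
    dot2 (g (i + 1)) (n (i + 1)) * wFun lam g n area (i + 1) x +
    dot2 (g (i + 2)) (n (i + 2)) * wFun lam g n area (i + 2) x

/-- The closed triangle `T = conv{v₀, v₁, v₂}`. -/
def Tset (v : Fin 3 → Vec2) : Set Vec2 := convexHull ℝ {v 0, v 1, v 2}

/-- The closed edge `eⱼ` of `T` opposite the vertex `vⱼ`. -/
def edgeSeg (v : Fin 3 → Vec2) (j : Fin 3) : Set Vec2 := segment ℝ (v (j + 1)) (v (j + 2))

/-- `det(v₁ − v₀, v₂ − v₀)`. -/
def detT (v : Fin 3 → Vec2) : ℝ :=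
  (v 1 0 - v 0 0) * (v 2 1 - v 0 1) - (v 1 1 - v 0 1) * (v 2 0 - v 0 0)


open Asymptotics Filter Topology in
/-- If `φ` is `C¹` and vanishes on the zero set of a `C¹` function `c`,
then `φ · max(c, 0)` is `C¹`. -/
theorem aux_mul_relu {E : Type*} [NormedAddCommGroup E] [NormedSpace ℝ E] {φ c : E → ℝ}
    (hφ : ContDiff ℝ 1 φ) (hc : ContDiff ℝ 1 c) (h0 : ∀ x, c x = 0 → φ x = 0) :
    ContDiff ℝ 1 (fun x => φ x * max (c x) 0) := by
  have hφd : Differentiable ℝ φ := hφ.differentiable one_ne_zero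
  have hcd : Differentiable ℝ c := hc.differentiable one_ne_zero
  set D : E → (E →L[ℝ] ℝ) := fun x =>
    max (c x) 0 • fderiv ℝ φ x + (if 0 < c x then φ x • fderiv ℝ c x else 0) with hDdef
  have hD : ∀ x, HasFDerivAt (fun y => φ y * max (c y) 0) (D x) x := by
    intro x
    rcases lt_trichotomy (c x) 0 with hx | hx | hx
    · have hev : ∀ᶠ y in 𝓝 x, c y < 0 :=
        (isOpen_lt hc.continuous continuous_const).eventually_mem hx
      have h2 : HasFDerivAt (fun y => φ y * max (c y) 0) (0 : E →L[ℝ] ℝ) x := by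
        refine (hasFDerivAt_const (0:ℝ) x).congr_of_eventuallyEq ?_
        filter_upwards [hev] with y hy
        simp [max_eq_right hy.le]
      have hDx : D x = 0 := by
        simp [hDdef, max_eq_right hx.le, if_neg (by linarith : ¬ (0:ℝ) < c x)]
      rw [hDx]; exact h2
    · have hφx : φ x = 0 := h0 x hx
      have hDx : D x = 0 := by
        simp [hDdef, hx]
      rw [hDx, HasFDerivAt, hasFDerivAtFilter_iff_isLittleO]
      have hO : (fun y => φ y) =O[𝓝 x] fun y => ‖y - x‖ := by
        have h1 := (hφd x).hasFDerivAt.isBigO_sub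
        simpa [hφx] using h1.norm_right
      have ho : (fun y => max (c y) 0) =o[𝓝 x] (fun _ => (1:ℝ)) := by
        rw [isLittleO_one_iff]
        have hcont : ContinuousAt (fun y => max (c y) 0) x :=
          (hc.continuous.max continuous_const).continuousAt
        simpa [hx] using hcont.tendsto
      have hprod := hO.mul_isLittleO ho
      have heq : (fun y : E => ‖y - x‖ * 1) = fun y => ‖y - x‖ := by
        funext y; ring
      rw [heq] at hprod
      have hfin : (fun y => φ y * max (c y) 0) =o[𝓝 x] fun y => y - x :=
        isLittleO_norm_right.mp hprod
      simpa [Function.comp_def, hφx, hx] using hfin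
    · have hev : ∀ᶠ y in 𝓝 x, 0 < c y :=
        (isOpen_lt continuous_const hc.continuous).eventually_mem hx
      have hmul := ((hφd x).hasFDerivAt).mul ((hcd x).hasFDerivAt)
      have h2 : HasFDerivAt (fun y => φ y * max (c y) 0)
          (φ x • fderiv ℝ c x + c x • fderiv ℝ φ x) x := by
        refine hmul.congr_of_eventuallyEq ?_
        filter_upwards [hev] with y hy
        simp [max_eq_left hy.le]
      have hDx : D x = φ x • fderiv ℝ c x + c x • fderiv ℝ φ x := by
        simp [hDdef, max_eq_left hx.le, if_pos hx, add_comm]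
      rw [hDx]; exact h2
  rw [contDiff_one_iff_fderiv]
  refine ⟨fun x => (hD x).differentiableAt, ?_⟩
  have hfd : (fderiv ℝ fun y => φ y * max (c y) 0) = D := funext fun x => (hD x).fderiv
  rw [hfd]
  refine Continuous.add ?_ ?_
  · exact (hc.continuous.max continuous_const).smul (hφ.continuous_fderiv one_ne_zero)
  · rw [continuous_iff_continuousAt]
    intro x
    rcases lt_trichotomy (c x) 0 with hx | hx | hx
    · have hev : ∀ᶠ y in 𝓝 x, c y < 0 :=
        (isOpen_lt hc.continuous continuous_const).eventually_mem hx
      refine (continuousAt_const (y := (0 : E →L[ℝ] ℝ))).congr ?_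
      filter_upwards [hev] with y hy
      rw [if_neg (by linarith : ¬ (0:ℝ) < c y)]
    · have hφx : φ x = 0 := h0 x hx
      have hval : (if 0 < c x then φ x • fderiv ℝ c x else 0) = 0 := by simp [hx]
      have hT : Tendsto (fun y => if 0 < c y then φ y • fderiv ℝ c y else 0) (𝓝 x)
          (𝓝 0) := by
        apply squeeze_zero_norm (a := fun y => ‖φ y‖ * ‖fderiv ℝ c y‖)
        · intro y
          split_ifs with h
          · exact le_of_eq (norm_smul _ _)
          · rw [norm_zero]
            positivity
        · have ht : Tendsto (fun y => ‖φ y‖ * ‖fderiv ℝ c y‖) (𝓝 x)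
              (𝓝 (‖φ x‖ * ‖fderiv ℝ c x‖)) :=
            ((hφ.continuous.norm).mul ((hc.continuous_fderiv one_ne_zero).norm)).tendsto x
          simpa [hφx] using ht
      unfold ContinuousAt
      simpa [hx] using hT
    · have hev : ∀ᶠ y in 𝓝 x, 0 < c y :=
        (isOpen_lt continuous_const hc.continuous).eventually_mem hx
      refine ((hφ.continuous.smul (hc.continuous_fderiv one_ne_zero)).continuousAt).congr ?_
      filter_upwards [hev] with y hy
      rw [if_pos hy]
      rfl

/-- The key pointwise identity decomposing `max(0, a, b)^{k+1} (a - b)`. -/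
theorem key_id (k : ℕ) (a b : ℝ) :
    max 0 (max a b) ^ (k + 1) * (a - b) =
      a ^ k * (a - b) * max a 0 -
        (b ^ k * max b 0 - a ^ k * max a 0) * max (b - a) 0 := by
  rcases le_total a b with hab | hab
  · rcases le_total b 0 with hb | hb
    · have ha : a ≤ 0 := hab.trans hb
      rw [max_eq_right hab, max_eq_left hb, max_eq_right ha, max_eq_right hb]
      simp [zero_pow (Nat.succ_ne_zero k)]
    · rw [max_eq_right hab, max_eq_right hb, max_eq_left hb,
        max_eq_left (by linarith : (0:ℝ) ≤ b - a)]
      ring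
  · rcases le_total a 0 with ha | ha
    · have hb : b ≤ 0 := hab.trans ha
      rw [max_eq_left hab, max_eq_left ha, max_eq_right ha, max_eq_right hb,
        max_eq_right (by linarith : b - a ≤ 0)]
      simp [zero_pow (Nat.succ_ne_zero k)]
    · rw [max_eq_left hab, max_eq_right ha, max_eq_left ha,
        max_eq_right (by linarith : b - a ≤ 0)]
      ring

theorem lamR0_eq (lam : Fin 3 → Vec2 → ℝ) (x : Vec2) :
    lamR lam 0 x = max 0 (max (lam 0 x - lam 1 x) (lam 0 x - lam 2 x)) := by
  have h1 : max (lam 0 x - lam 1 x) (lam 0 x - lam 2 x)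
      = lam 0 x - min (lam 1 x) (lam 2 x) := max_sub_sub_left _ _ _
  have h2 : max (lam 0 x - lam 0 x) (lam 0 x - min (lam 1 x) (lam 2 x))
      = lam 0 x - min (lam 0 x) (min (lam 1 x) (lam 2 x)) := max_sub_sub_left _ _ _
  have h0 : lamR lam 0 x = lam 0 x - min (lam 0 x) (min (lam 1 x) (lam 2 x)) := rfl
  rw [h0, ← h2, sub_self, h1]

/-- for every integer `k ≥ 1`, the enrichment potential
`v₀ = (4|T|²/(9(k+1))) (λ₀ᴿ)^{k+1} (λ₂ − λ₁)` is continuously differentiable on `ℝ²`. -/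
theorem vEnrich_contDiff_one
    (v : Fin 3 → Vec2) (hv : AffineIndependent ℝ v)
    (lam : Fin 3 → Vec2 → ℝ) (g : Fin 3 → Vec2) (cst : Fin 3 → ℝ)
    (hlam : ∀ i x, lam i x = dot2 (g i) x + cst i)
    (hdelta : ∀ i j, lam i (v j) = if i = j then 1 else 0)
    (vc : Vec2) (hvc : vc = (1 / 3 : ℝ) • (v 0 + v 1 + v 2))
    (area : ℝ) (harea : area = |detT v| / 2)
    (k : ℕ) (hk : 1 ≤ k) :
    ContDiff ℝ 1 (vEnrich lam area k 0) := by
  have hli : ∀ i, ContDiff ℝ 1 (lam i) := by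
    intro i
    have hrep : lam i = fun x => g i 0 * x 0 + g i 1 * x 1 + cst i := by
      funext x
      rw [hlam]
      rfl
    rw [hrep]
    have h0 : ContDiff ℝ 1 (fun x : Vec2 => x 0) :=
      (ContinuousLinearMap.proj (R := ℝ) (φ := fun _ : Fin 2 => ℝ) 0).contDiff
    have h1 : ContDiff ℝ 1 (fun x : Vec2 => x 1) :=
      (ContinuousLinearMap.proj (R := ℝ) (φ := fun _ : Fin 2 => ℝ) 1).contDiff
    exact ((contDiff_const.mul h0).add (contDiff_const.mul h1)).add contDiff_const
  have hk0 : k ≠ 0 := by omega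
  have ha : ContDiff ℝ 1 (fun x => lam 0 x - lam 1 x) := (hli 0).sub (hli 1)
  have hb : ContDiff ℝ 1 (fun x => lam 0 x - lam 2 x) := (hli 0).sub (hli 2)
  have key : vEnrich lam area k 0 = fun x =>
      4 * area ^ 2 / (9 * ((k : ℝ) + 1)) *
        ((lam 0 x - lam 1 x) ^ k * ((lam 0 x - lam 1 x) - (lam 0 x - lam 2 x)) *
            max (lam 0 x - lam 1 x) 0 -
          ((lam 0 x - lam 2 x) ^ k * max (lam 0 x - lam 2 x) 0 -
              (lam 0 x - lam 1 x) ^ k * max (lam 0 x - lam 1 x) 0) *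
            max ((lam 0 x - lam 2 x) - (lam 0 x - lam 1 x)) 0) := by
    funext x
    unfold vEnrich
    have e1 : (0 + 1 : Fin 3) = 1 := rfl
    have e2 : (0 + 2 : Fin 3) = 2 := rfl
    rw [e1, e2, lamR0_eq]
    rw [show lam 2 x - lam 1 x
        = (lam 0 x - lam 1 x) - (lam 0 x - lam 2 x) from by ring]
    rw [mul_assoc, key_id]
  rw [key]
  refine contDiff_const.mul (ContDiff.sub ?_ ?_)
  · refine aux_mul_relu ((ha.pow k).mul (ha.sub hb)) ha ?_
    intro x hx
    rw [hx]
    simp [zero_pow hk0]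
  · refine aux_mul_relu ?_ (hb.sub ha) ?_
    · refine ContDiff.sub ?_ ?_
      · refine aux_mul_relu (hb.pow k) hb ?_
        intro x hx
        rw [hx]
        exact zero_pow hk0
      · refine aux_mul_relu (ha.pow k) ha ?_
        intro x hx
        rw [hx]
        exact zero_pow hk0
    · intro x hx
      have hba : lam 0 x - lam 2 x = lam 0 x - lam 1 x := by linarith [sub_eq_zero.mp hx]
      rw [hba]
      ring
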